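/- In the polynomial ring ℚ[p_{11},p_{12},p_{21},p_{22},p_{31},p_{32}], let I be the ideal generated by the three 2×2 minors of M_1 = [[p_{11}+p_{12}, p_{11}+p_{12}],[p_{21}+p_{22}, 3p_{22}],[p_{31}+p_{32}, 2p_{32}]] together with the determinant of M_2 = [[p_{11}+p_{21}+p_{31}, 2p_{21}+2p_{31}],[p_{12}+p_{22}+p_{32}, p_{22}+4p_{32}]]. Then I equals the intersection of the two ideals P_1 = ⟨p_{31}−p_{32}, p_{21}−2p_{22}, p_{11}p_{22}−4p_{12}p_{22}−2p_{22}²+4p_{11}p_{32}−2p_{12}p_{32}+3p_{22}p_{32}+2p_{32}²⟩ and P_2 = ⟨p_{11}+p_{12}, 3p_{22}p_{31}−2p_{21}p_{32}+p_{22}p_{32}, 6p_{12}p_{21}+3p_{12}p_{22}+3p_{21}p_{22}+6p_{12}p_{31}+12p_{12}p_{32}−4p_{21}p_{32}−p_{22}p_{32}−6p_{31}p_{32}⟩, and both P_1 and P_2 are prime ideals. -/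

import Mathlib

open MvPolynomial

/-- The variable `p₁₁` in `ℚ[p₁₁,p₁₂,p₂₁,p₂₂,p₃₁,p₃₂]`. -/
noncomputable def s11 : MvPolynomial (Fin 6) ℚ := X 0
/-- The variable `p₁₂`. -/
noncomputable def s12 : MvPolynomial (Fin 6) ℚ := X 1
/-- The variable `p₂₁`. -/
noncomputable def s21 : MvPolynomial (Fin 6) ℚ := X 2
/-- The variable `p₂₂`. -/
noncomputable def s22 : MvPolynomial (Fin 6) ℚ := X 3
/-- The variable `p₃₁`. -/
noncomputable def s31 : MvPolynomial (Fin 6) ℚ := X 4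
/-- The variable `p₃₂`. -/
noncomputable def s32 : MvPolynomial (Fin 6) ℚ := X 5


set_option maxHeartbeats 1600000
set_option synthInstance.maxHeartbeats 400000
set_option linter.unusedTactic false
set_option linter.unreachableTactic false
set_option linter.unnecessarySeqFocus false

namespace CentAux


/-- Key substitution lemma. -/
theorem sub_aeval_mem {m : ℕ} (u : Fin m → MvPolynomial (Fin m) ℚ)
    (I : Ideal (MvPolynomial (Fin m) ℚ)) (h : ∀ i, X i - u i ∈ I)
    (p : MvPolynomial (Fin m) ℚ) : p - aeval u p ∈ I := by
  induction p using MvPolynomial.induction_on with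
  | C a => simp
  | add p q hp hq =>
      have : p + q - aeval u (p + q) = (p - aeval u p) + (q - aeval u q) := by
        rw [map_add]; ring
      rw [this]; exact I.add_mem hp hq
  | mul_X p i hp =>
      have : p * X i - aeval u (p * X i)
          = (p - aeval u p) * X i + aeval u p * (X i - u i) := by
        rw [map_mul, aeval_X]; ring
      rw [this]
      exact I.add_mem (I.mul_mem_right _ hp) (I.mul_mem_left _ (h i))

theorem ker_eq {m k : ℕ} (v : Fin m → MvPolynomial (Fin k) ℚ)
    (s : Fin k → MvPolynomial (Fin m) ℚ)
    (S : Set (MvPolynomial (Fin m) ℚ)) (G : MvPolynomial (Fin k) ℚ)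
    (h1 : ∀ i, X i - aeval s (v i) ∈ Ideal.span S)
    (h2 : ∀ g ∈ S, aeval v g ∈ Ideal.span {G})
    (h3 : aeval s G ∈ Ideal.span S) :
    RingHom.ker ((Ideal.Quotient.mk (Ideal.span {G})).comp
      ((aeval v : MvPolynomial (Fin m) ℚ →ₐ[ℚ] MvPolynomial (Fin k) ℚ) :
        MvPolynomial (Fin m) ℚ →+* MvPolynomial (Fin k) ℚ)) = Ideal.span S := by
  apply le_antisymm
  · intro p hp
    have hmem : aeval v p ∈ Ideal.span {G} := by
      rw [← Ideal.Quotient.eq_zero_iff_mem]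
      exact hp
    obtain ⟨q, hq⟩ := Ideal.mem_span_singleton'.mp hmem
    have hcomp : aeval s (aeval v p) = aeval (fun i => aeval s (v i)) p := by
      have := MvPolynomial.comp_aeval (f := v)
        (φ := (aeval s : MvPolynomial (Fin k) ℚ →ₐ[ℚ] MvPolynomial (Fin m) ℚ))
      exact congrFun (congrArg DFunLike.coe this) p
    have key : p - aeval s (aeval v p) ∈ Ideal.span S := by
      rw [hcomp]
      exact sub_aeval_mem _ _ h1 p
    have h4 : aeval s (aeval v p) ∈ Ideal.span S := by
      rw [← hq, map_mul]
      exact Ideal.mul_mem_left _ _ h3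
    have := Ideal.add_mem _ key h4
    simpa using this
  · rw [Ideal.span_le]
    intro g hg
    simp only [SetLike.mem_coe, RingHom.mem_ker, RingHom.comp_apply]
    rw [Ideal.Quotient.eq_zero_iff_mem]
    exact h2 g hg

theorem span_isPrime {m k : ℕ} (v : Fin m → MvPolynomial (Fin k) ℚ)
    (s : Fin k → MvPolynomial (Fin m) ℚ)
    (S : Set (MvPolynomial (Fin m) ℚ)) (G : MvPolynomial (Fin k) ℚ)
    (hG : Prime G)
    (h1 : ∀ i, X i - aeval s (v i) ∈ Ideal.span S)
    (h2 : ∀ g ∈ S, aeval v g ∈ Ideal.span {G})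
    (h3 : aeval s G ∈ Ideal.span S) :
    (Ideal.span S).IsPrime := by
  haveI : (Ideal.span {G}).IsPrime := (Ideal.span_singleton_prime hG.ne_zero).mpr hG
  rw [← ker_eq v s S G h1 h2 h3]
  exact RingHom.ker_isPrime _

theorem prime_of_map {R S : Type*} [CommRing R] [CommRing S] (e : R ≃+* S) {x : R}
    (h : Prime (e x)) : Prime x := by
  rw [← MulEquiv.prime_iff e.toMulEquiv]
  exact h

theorem not_mem_span_of_eval {m : ℕ} (S : Set (MvPolynomial (Fin m) ℚ)) (w : Fin m → ℚ)
    (hS : ∀ g ∈ S, eval w g = 0) (x : MvPolynomial (Fin m) ℚ) (hx : eval w x ≠ 0) :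
    x ∉ Ideal.span S := by
  intro hmem
  apply hx
  have hle : Ideal.span S ≤ RingHom.ker (eval w) := by
    rw [Ideal.span_le]; intro g hg; exact hS g hg
  exact hle hmem

theorem cancel_C {m : ℕ} (q : ℚ) (hq : q ≠ 0) {x : MvPolynomial (Fin m) ℚ}
    {I : Ideal (MvPolynomial (Fin m) ℚ)} (h : C q * x ∈ I) : x ∈ I := by
  have : x = C q⁻¹ * (C q * x) := by
    rw [← mul_assoc, ← C_mul, inv_mul_cancel₀ hq, C_1, one_mul]
  rw [this]
  exact I.mul_mem_left _ h

theorem not_isSquare_rat (p : ℕ) (hp : ¬ IsSquare p) : ∀ r : ℚ, r ^ 2 ≠ (p : ℚ) := by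
  intro r h
  exact hp (Rat.isSquare_natCast_iff.mp ⟨r, by rw [← h]; ring⟩)



theorem prime_quadratic {n : ℕ} (a : ℚ) (ha : a ≠ 0) (b c : MvPolynomial (Fin n) ℚ)
    (w : Fin n → ℚ) (hsq : ∀ r : ℚ, r ^ 2 ≠ (eval w b) ^ 2 - 4 * a * (eval w c)) :
    Prime (Polynomial.C (C a) * Polynomial.X ^ 2 + Polynomial.C b * Polynomial.X
      + Polynomial.C c :
      Polynomial (MvPolynomial (Fin n) ℚ)) := by
  letI : NormalizationMonoid (MvPolynomial (Fin n) ℚ) :=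
    UniqueFactorizationMonoid.normalizationMonoid.toNormalizationMonoid
  letI : NormalizedGCDMonoid (MvPolynomial (Fin n) ℚ) :=
    UniqueFactorizationMonoid.toNormalizedGCDMonoid (MvPolynomial (Fin n) ℚ)
  set K := FractionRing (MvPolynomial (Fin n) ℚ)
  set F : Polynomial (MvPolynomial (Fin n) ℚ) := Polynomial.C (C a) * Polynomial.X ^ 2
      + Polynomial.C b * Polynomial.X + Polynomial.C c with hFdef
  have hCa : IsUnit (C a : MvPolynomial (Fin n) ℚ) :=
    (isUnit_iff_ne_zero.mpr ha).map (C : ℚ →+* MvPolynomial (Fin n) ℚ)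
  have hF2 : F.coeff 2 = C a := by
    simp [hFdef, Polynomial.coeff_add, Polynomial.coeff_C_mul, Polynomial.coeff_X_pow,
      Polynomial.coeff_C]
  have hprim : F.IsPrimitive := by
    intro r hr
    have : r ∣ C a := by rw [← hF2]; exact (Polynomial.C_dvd_iff_dvd_coeff r F).mp hr 2
    exact isUnit_of_dvd_unit this hCa
  rw [UniqueFactorizationMonoid.irreducible_iff_prime.symm]
  rw [hprim.irreducible_iff_irreducible_map_fraction_map (K := K)]
  set φ := algebraMap (MvPolynomial (Fin n) ℚ) K with hφdef
  have hmap : F.map φ = Polynomial.C (φ (C a)) * Polynomial.X ^ 2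
      + Polynomial.C (φ b) * Polynomial.X + Polynomial.C (φ c) := by
    simp [hFdef]
  have ha' : φ (C a) ≠ 0 := by
    rw [Ne, hφdef, IsFractionRing.to_map_eq_zero_iff]
    simpa using ha
  have hdeg : (F.map φ).natDegree = 2 := by rw [hmap]; exact Polynomial.natDegree_quadratic ha'
  have hF0 : F.map φ ≠ 0 := by
    intro h0; rw [h0] at hdeg; simp at hdeg
  have hΔ : φ (b ^ 2 - 4 * (C a) * c) = (φ b) ^ 2 - 4 * (φ (C a)) * (φ c) := by
    rw [map_sub, map_pow, map_mul, map_mul, map_ofNat]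
  -- no root
  have hroot : ∀ x : K, φ (C a) * x ^ 2 + φ b * x + φ c ≠ 0 := by
    intro x hx
    have hy : (2 * φ (C a) * x + φ b) ^ 2 = (φ b) ^ 2 - 4 * (φ (C a)) * (φ c) := by
      linear_combination (4 * φ (C a)) * hx
    have hint : IsIntegral (MvPolynomial (Fin n) ℚ) (2 * φ (C a) * x + φ b) := by
      refine ⟨Polynomial.X ^ 2 - Polynomial.C (b ^ 2 - 4 * (C a) * c),
        Polynomial.monic_X_pow_sub_C _ (by norm_num), ?_⟩
      simp only [Polynomial.eval₂_sub, Polynomial.eval₂_pow, Polynomial.eval₂_X,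
        Polynomial.eval₂_C]
      rw [← hφdef, hΔ, hy, sub_self]
    obtain ⟨z, hz⟩ := IsIntegrallyClosed.isIntegral_iff.mp hint
    have hφz : φ (z ^ 2) = φ (b ^ 2 - 4 * (C a) * c) := by
      rw [map_pow, hz, hy, hΔ]
    have hz2 : z ^ 2 = b ^ 2 - 4 * (C a) * c :=
      IsFractionRing.injective (MvPolynomial (Fin n) ℚ) K hφz
    apply hsq (eval w z)
    have h5 := congrArg (eval w) hz2
    rw [map_pow] at h5
    rw [h5, map_sub, map_pow, map_mul, map_mul, map_ofNat, eval_C]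
  constructor
  · intro hu
    have := Polynomial.natDegree_eq_zero_of_isUnit hu
    rw [hdeg] at this; exact two_ne_zero this
  · intro g h hgh
    by_contra hcon
    push_neg at hcon
    obtain ⟨hg, hh⟩ := hcon
    have hgne : g ≠ 0 := by rintro rfl; rw [zero_mul] at hgh; exact hF0 hgh
    have hhne : h ≠ 0 := by rintro rfl; rw [mul_zero] at hgh; exact hF0 hgh
    have hsum : g.natDegree + h.natDegree = 2 := by
      rw [← Polynomial.natDegree_mul hgne hhne, ← hgh, hdeg]
    have hunit : ∀ p : Polynomial K, p ≠ 0 → p.natDegree = 0 → IsUnit p := by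
      intro p hp h0
      have hc : p.coeff 0 ≠ 0 := by
        intro hc
        apply hp
        rw [Polynomial.eq_C_of_natDegree_eq_zero h0, hc, map_zero]
      rw [Polynomial.eq_C_of_natDegree_eq_zero h0]
      exact Polynomial.isUnit_C.mpr (isUnit_iff_ne_zero.mpr hc)
    have hgd : g.natDegree ≠ 0 := fun e => hg (hunit g hgne e)
    have hhd : h.natDegree ≠ 0 := fun e => hh (hunit h hhne e)
    have hg1 : g.natDegree = 1 := by omega
    have hu : g.coeff 1 ≠ 0 := by
      have := Polynomial.leadingCoeff_ne_zero.mpr hgne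
      rwa [Polynomial.leadingCoeff, hg1] at this
    have hgeq := Polynomial.eq_X_add_C_of_natDegree_le_one (le_of_eq hg1)
    set x : K := -g.coeff 0 / g.coeff 1 with hx
    have hgx : Polynomial.eval x g = 0 := by
      conv_lhs => rw [hgeq]
      simp only [Polynomial.eval_add, Polynomial.eval_mul, Polynomial.eval_C, Polynomial.eval_X]
      rw [hx]
      rw [mul_comm, div_mul_cancel₀ _ hu]
      ring
    have hFx : Polynomial.eval x (F.map φ) = 0 := by
      rw [hgh, Polynomial.eval_mul, hgx, zero_mul]
    apply hroot x
    rw [hmap] at hFx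
    simpa using hFx




theorem mem_of_eq {A : Type*} [CommRing A] {I : Ideal A} {x y : A} (h : x = y) (hy : y ∈ I) :
    x ∈ I := h ▸ hy


theorem not_sq (n k : ℕ) (h1 : k * k < n) (h2 : n < (k+1) * (k+1)) : ¬ IsSquare n := by
  rintro ⟨r, rfl⟩
  rcases le_or_gt r k with h | h
  · nlinarith
  · nlinarith


theorem prime_mv {n : ℕ} (q : MvPolynomial (Fin (n+1)) ℚ) (a : ℚ) (ha : a ≠ 0)
    (b c : MvPolynomial (Fin n) ℚ) (w : Fin n → ℚ)
    (hq : finSuccEquiv ℚ n q = Polynomial.C (C a) * Polynomial.X ^ 2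
      + Polynomial.C b * Polynomial.X + Polynomial.C c)
    (hsq : ∀ r : ℚ, r ^ 2 ≠ (eval w b) ^ 2 - 4 * a * (eval w c)) : Prime q := by
  apply prime_of_map (finSuccEquiv ℚ n).toRingEquiv
  have h := prime_quadratic a ha b c w hsq
  rw [← hq] at h
  exact h

noncomputable def f4 : MvPolynomial (Fin 4) ℚ :=
  X 1 * X 3 - 4 * X 2 * X 3 - 2 * (X 3) ^ 2 + 4 * X 1 * X 0 - 2 * X 2 * X 0
    + 3 * X 3 * X 0 + 2 * (X 0) ^ 2

theorem prime_f4 : Prime f4 := by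
  apply prime_mv f4 2 (by norm_num) (4 * X 0 - 2 * X 1 + 3 * X 2)
      (X 0 * X 2 - 4 * X 1 * X 2 - 2 * (X 2) ^ 2) ![2, 1, 1]
  · have e1 : (X 1 : MvPolynomial (Fin 4) ℚ) = X (Fin.succ 0) := rfl
    have e2 : (X 2 : MvPolynomial (Fin 4) ℚ) = X (Fin.succ 1) := rfl
    have e3 : (X 3 : MvPolynomial (Fin 4) ℚ) = X (Fin.succ 2) := rfl
    rw [f4, e1, e2, e3]
    simp only [map_add, map_sub, map_mul, map_pow, map_ofNat, finSuccEquiv_X_zero,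
      finSuccEquiv_X_succ]
    ring
  · have hev : (eval ![2,1,1] (4 * X 0 - 2 * X 1 + 3 * X 2 : MvPolynomial (Fin 3) ℚ)) ^ 2
        - 4 * 2 * (eval ![2,1,1] (X 0 * X 2 - 4 * X 1 * X 2 - 2 * (X 2) ^ 2 :
          MvPolynomial (Fin 3) ℚ)) = 113 := by
      simp
      norm_num
    rw [hev]
    exact not_isSquare_rat 113 (not_sq 113 10 (by norm_num) (by norm_num))


noncomputable def Gbar : MvPolynomial (Fin 4) ℚ :=
  3 * (X 0) ^ 2 + 3 * X 0 * X 2 + 7 * X 0 * X 3 + 2 * X 2 * X 3 + 2 * (X 3) ^ 2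

theorem prime_Gbar : Prime Gbar := by
  apply prime_mv Gbar 3 (by norm_num) (3 * X 1 + 7 * X 2)
      (2 * X 1 * X 2 + 2 * (X 2) ^ 2) ![0, 2, 1]
  · have e1 : (X 1 : MvPolynomial (Fin 4) ℚ) = X (Fin.succ 0) := rfl
    have e2 : (X 2 : MvPolynomial (Fin 4) ℚ) = X (Fin.succ 1) := rfl
    have e3 : (X 3 : MvPolynomial (Fin 4) ℚ) = X (Fin.succ 2) := rfl
    rw [Gbar]
    simp only [e2, e3]
    simp only [map_add, map_sub, map_mul, map_pow, map_ofNat, finSuccEquiv_X_zero,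
      finSuccEquiv_X_succ]
    ring
  · have hev : (eval ![0,2,1] (3 * X 1 + 7 * X 2 : MvPolynomial (Fin 3) ℚ)) ^ 2
        - 4 * 3 * (eval ![0,2,1] (2 * X 1 * X 2 + 2 * (X 2) ^ 2 :
          MvPolynomial (Fin 3) ℚ)) = 97 := by
      simp
      norm_num
    rw [hev]
    exact not_isSquare_rat 97 (not_sq 97 9 (by norm_num) (by norm_num))

noncomputable def H4 : MvPolynomial (Fin 4) ℚ :=
  3 * (X 0) ^ 2 + 3 * X 0 * X 1 + X 0 * X 2 - 2 * X 3 * X 2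

theorem prime_H4 : Prime H4 := by
  apply prime_mv H4 3 (by norm_num) (3 * X 0 + X 1) (-(2 * X 2 * X 1)) ![2, 1, 1]
  · have e1 : (X 1 : MvPolynomial (Fin 4) ℚ) = X (Fin.succ 0) := rfl
    have e2 : (X 2 : MvPolynomial (Fin 4) ℚ) = X (Fin.succ 1) := rfl
    have e3 : (X 3 : MvPolynomial (Fin 4) ℚ) = X (Fin.succ 2) := rfl
    rw [H4, e1, e2, e3]
    simp only [map_add, map_sub, map_mul, map_pow, map_neg, map_ofNat, finSuccEquiv_X_zero,
      finSuccEquiv_X_succ]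
    ring
  · have hev : (eval ![2,1,1] (3 * X 0 + X 1 : MvPolynomial (Fin 3) ℚ)) ^ 2
        - 4 * 3 * (eval ![2,1,1] (-(2 * X 2 * X 1) : MvPolynomial (Fin 3) ℚ)) = 73 := by
      simp
      norm_num
    rw [hev]
    exact not_isSquare_rat 73 (not_sq 73 8 (by norm_num) (by norm_num))

noncomputable def H5 : MvPolynomial (Fin 5) ℚ :=
  3 * (X 0) ^ 2 + 3 * X 0 * X 1 + X 0 * X 2 - 2 * X 3 * X 2

theorem prime_H5 : Prime H5 := by
  apply prime_mv H5 3 (by norm_num) (3 * X 0 + X 1) (-(2 * X 2 * X 1)) ![2, 1, 1, 0]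
  · have e1 : (X 1 : MvPolynomial (Fin 5) ℚ) = X (Fin.succ 0) := rfl
    have e2 : (X 2 : MvPolynomial (Fin 5) ℚ) = X (Fin.succ 1) := rfl
    have e3 : (X 3 : MvPolynomial (Fin 5) ℚ) = X (Fin.succ 2) := rfl
    rw [H5, e1, e2, e3]
    simp only [map_add, map_sub, map_mul, map_pow, map_neg, map_ofNat, finSuccEquiv_X_zero,
      finSuccEquiv_X_succ]
    ring
  · have hev : (eval ![2,1,1,0] (3 * X 0 + X 1 : MvPolynomial (Fin 4) ℚ)) ^ 2
        - 4 * 3 * (eval ![2,1,1,0] (-(2 * X 2 * X 1) : MvPolynomial (Fin 4) ℚ)) = 73 := by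
      simp
      norm_num
    rw [hev]
    exact not_isSquare_rat 73 (not_sq 73 8 (by norm_num) (by norm_num))

/-- `G1` in `ℚ[s21,s22,s31,s32]` (vars 0,1,2,3). -/
noncomputable def G1B : MvPolynomial (Fin 4) ℚ :=
  3 * X 1 * X 2 + X 1 * X 3 - 2 * X 0 * X 3

/-- `G1` in `ℚ[s12,s21,s22,s31,s32]` (vars 0,1,2,3,4). -/
noncomputable def G15 : MvPolynomial (Fin 5) ℚ :=
  3 * X 2 * X 3 + X 2 * X 4 - 2 * X 1 * X 4

noncomputable def theta4 : MvPolynomial (Fin 4) ℚ ≃ₐ[ℚ] MvPolynomial (Fin 4) ℚ :=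
  AlgEquiv.ofAlgHom
    (aeval ![X 1, X 2 - X 1, X 3, X 0])
    (aeval ![X 3, X 0, X 0 + X 1, X 2])
    (by apply MvPolynomial.algHom_ext; intro i; fin_cases i <;> simp)
    (by apply MvPolynomial.algHom_ext; intro i; fin_cases i <;> simp)

noncomputable def theta5 : MvPolynomial (Fin 5) ℚ ≃ₐ[ℚ] MvPolynomial (Fin 5) ℚ :=
  AlgEquiv.ofAlgHom
    (aeval ![X 2, X 3 - X 2, X 4, X 1, X 0])
    (aeval ![X 4, X 3, X 0, X 0 + X 1, X 2])
    (by apply MvPolynomial.algHom_ext; intro i; fin_cases i <;> simp)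
    (by apply MvPolynomial.algHom_ext; intro i; fin_cases i <;> simp)

theorem prime_G1B : Prime G1B := by
  have h : theta4 H4 = G1B := by
    rw [H4, G1B]
    simp [theta4, map_ofNat]
    ring
  apply prime_of_map theta4.symm.toRingEquiv
  have : theta4.symm G1B = H4 := by rw [← h]; simp
  rw [show theta4.symm.toRingEquiv G1B = theta4.symm G1B from rfl, this]
  exact prime_H4

theorem prime_G15 : Prime G15 := by
  have h : theta5 H5 = G15 := by
    rw [H5, G15]
    simp [theta5, map_ofNat]
    ring
  apply prime_of_map theta5.symm.toRingEquiv
  have : theta5.symm G15 = H5 := by rw [← h]; simp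
  rw [show theta5.symm.toRingEquiv G15 = theta5.symm G15 from rfl, this]
  exact prime_H5



abbrev R6 := MvPolynomial (Fin 6) ℚ
abbrev R5 := MvPolynomial (Fin 5) ℚ
abbrev R4 := MvPolynomial (Fin 4) ℚ

noncomputable def d1 : R6 := X 4 - X 5
noncomputable def d2 : R6 := X 2 - 2 * X 3
noncomputable def f6 : R6 := X 0 * X 3 - 4 * X 1 * X 3 - 2 * X 3 ^ 2 + 4 * X 0 * X 5
  - 2 * X 1 * X 5 + 3 * X 3 * X 5 + 2 * X 5 ^ 2
noncomputable def c6 : R6 := X 0 + X 1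
noncomputable def g1 : R6 := 3 * X 3 * X 4 - 2 * X 2 * X 5 + X 3 * X 5
noncomputable def g2 : R6 := 6 * X 1 * X 2 + 3 * X 1 * X 3 + 3 * X 2 * X 3 + 6 * X 1 * X 4
  + 12 * X 1 * X 5 - 4 * X 2 * X 5 - X 3 * X 5 - 6 * X 4 * X 5
noncomputable def A3 : R6 := X 3 + 2 * X 2 + 2 * X 4 + 4 * X 5
noncomputable def Ba : R6 := 3 * X 2 * X 3 - 4 * X 2 * X 5 - X 3 * X 5 - 6 * X 4 * X 5

theorem f4_def : f4 = X 1 * X 3 - 4 * X 2 * X 3 - 2 * (X 3) ^ 2 + 4 * X 1 * X 0 - 2 * X 2 * X 0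
    + 3 * X 3 * X 0 + 2 * (X 0) ^ 2 := rfl
theorem Gbar_def : Gbar = 3 * (X 0) ^ 2 + 3 * X 0 * X 2 + 7 * X 0 * X 3 + 2 * X 2 * X 3
    + 2 * (X 3) ^ 2 := rfl
theorem G15_def : G15 = 3 * X 2 * X 3 + X 2 * X 4 - 2 * X 1 * X 4 := rfl


noncomputable def vP1 : Fin 6 → R4 := ![X 1, X 2, 2 * X 3, X 3, X 0, X 0]
noncomputable def sP1 : Fin 4 → R6 := ![X 5, X 0, X 1, X 3]
noncomputable def vM : Fin 6 → R5 := ![-X 0, X 0, X 1, X 2, X 3, X 4]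
noncomputable def sM : Fin 5 → R6 := ![X 1, X 2, X 3, X 4, X 5]
noncomputable def vN : Fin 6 → R4 := ![-X 1, X 1, X 2, -2 * X 2 - 2 * X 0 - 4 * X 3, X 0, X 3]
noncomputable def sN : Fin 4 → R6 := ![X 4, X 1, X 2, X 5]
@[simp] theorem vP1_0 : vP1 0 = X 1 := rfl
@[simp] theorem vP1_1 : vP1 1 = X 2 := rfl
@[simp] theorem vP1_2 : vP1 2 = 2 * X 3 := rfl
@[simp] theorem vP1_3 : vP1 3 = X 3 := rfl
@[simp] theorem vP1_4 : vP1 4 = X 0 := rfl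
@[simp] theorem vP1_5 : vP1 5 = X 0 := rfl
@[simp] theorem sP1_0 : sP1 0 = X 5 := rfl
@[simp] theorem sP1_1 : sP1 1 = X 0 := rfl
@[simp] theorem sP1_2 : sP1 2 = X 1 := rfl
@[simp] theorem sP1_3 : sP1 3 = X 3 := rfl
@[simp] theorem vM_0 : vM 0 = -X 0 := rfl
@[simp] theorem vM_1 : vM 1 = X 0 := rfl
@[simp] theorem vM_2 : vM 2 = X 1 := rfl
@[simp] theorem vM_3 : vM 3 = X 2 := rfl
@[simp] theorem vM_4 : vM 4 = X 3 := rfl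
@[simp] theorem vM_5 : vM 5 = X 4 := rfl
@[simp] theorem sM_0 : sM 0 = X 1 := rfl
@[simp] theorem sM_1 : sM 1 = X 2 := rfl
@[simp] theorem sM_2 : sM 2 = X 3 := rfl
@[simp] theorem sM_3 : sM 3 = X 4 := rfl
@[simp] theorem sM_4 : sM 4 = X 5 := rfl
@[simp] theorem vN_0 : vN 0 = -X 1 := rfl
@[simp] theorem vN_1 : vN 1 = X 1 := rfl
@[simp] theorem vN_2 : vN 2 = X 2 := rfl
@[simp] theorem vN_3 : vN 3 = -2 * X 2 - 2 * X 0 - 4 * X 3 := rfl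
@[simp] theorem vN_4 : vN 4 = X 0 := rfl
@[simp] theorem vN_5 : vN 5 = X 3 := rfl
@[simp] theorem sN_0 : sN 0 = X 4 := rfl
@[simp] theorem sN_1 : sN 1 = X 1 := rfl
@[simp] theorem sN_2 : sN 2 = X 2 := rfl
@[simp] theorem sN_3 : sN 3 = X 5 := rfl


theorem P1_isPrime : (Ideal.span {d1, d2, f6}).IsPrime := by
  have hd1 : d1 ∈ Ideal.span {d1, d2, f6} := Ideal.subset_span (by simp [map_ofNat, map_ofNat])
  have hd2 : d2 ∈ Ideal.span {d1, d2, f6} := Ideal.subset_span (by simp [map_ofNat, map_ofNat])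
  have hf6 : f6 ∈ Ideal.span {d1, d2, f6} := Ideal.subset_span (by simp [map_ofNat, map_ofNat])
  apply span_isPrime vP1 sP1 _ f4 prime_f4
  · intro i
    fin_cases i
    · exact mem_of_eq (by simp [map_ofNat, map_ofNat]) (Ideal.zero_mem _)
    · exact mem_of_eq (by simp [map_ofNat, map_ofNat]) (Ideal.zero_mem _)
    · exact mem_of_eq (by simp [map_ofNat, d2]) hd2
    · exact mem_of_eq (by simp [map_ofNat, map_ofNat]) (Ideal.zero_mem _)
    · exact mem_of_eq (by simp [map_ofNat, d1]) hd1
    · exact mem_of_eq (by simp [map_ofNat, map_ofNat]) (Ideal.zero_mem _)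
  · intro g hg
    simp only [Set.mem_insert_iff, Set.mem_singleton_iff] at hg
    rcases hg with rfl | rfl | rfl
    · exact mem_of_eq (by simp [map_ofNat, d1]) (Ideal.zero_mem _)
    · exact mem_of_eq (by simp [map_ofNat, d2] <;> ring) (Ideal.zero_mem _)
    · exact mem_of_eq (by simp [map_ofNat, f6, f4_def] <;> ring) (Ideal.subset_span rfl)
  · exact mem_of_eq (by simp [map_ofNat, f4_def, f6] <;> ring) hf6

theorem M_isPrime : (Ideal.span {c6, g1}).IsPrime := by
  have hc : c6 ∈ Ideal.span {c6, g1} := Ideal.subset_span (by simp [map_ofNat, map_ofNat])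
  have hg1 : g1 ∈ Ideal.span {c6, g1} := Ideal.subset_span (by simp [map_ofNat, map_ofNat])
  apply span_isPrime vM sM _ G15 prime_G15
  · intro i
    fin_cases i
    · exact mem_of_eq (by simp [map_ofNat, c6] <;> ring) hc
    · exact mem_of_eq (by simp [map_ofNat, map_ofNat]) (Ideal.zero_mem _)
    · exact mem_of_eq (by simp [map_ofNat, map_ofNat]) (Ideal.zero_mem _)
    · exact mem_of_eq (by simp [map_ofNat, map_ofNat]) (Ideal.zero_mem _)
    · exact mem_of_eq (by simp [map_ofNat, map_ofNat]) (Ideal.zero_mem _)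
    · exact mem_of_eq (by simp [map_ofNat, map_ofNat]) (Ideal.zero_mem _)
  · intro g hg
    simp only [Set.mem_insert_iff, Set.mem_singleton_iff] at hg
    rcases hg with rfl | rfl
    · exact mem_of_eq (by simp [map_ofNat, c6]) (Ideal.zero_mem _)
    · exact mem_of_eq (by simp [map_ofNat, g1, G15_def] <;> ring) (Ideal.subset_span rfl)
  · exact mem_of_eq (by simp [map_ofNat, G15_def, g1] <;> ring) hg1

theorem N_isPrime : (Ideal.span {c6, g1, A3}).IsPrime := by
  have hc : c6 ∈ Ideal.span {c6, g1, A3} := Ideal.subset_span (by simp [map_ofNat, map_ofNat])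
  have hg1 : g1 ∈ Ideal.span {c6, g1, A3} := Ideal.subset_span (by simp [map_ofNat, map_ofNat])
  have hA3 : A3 ∈ Ideal.span {c6, g1, A3} := Ideal.subset_span (by simp [map_ofNat, map_ofNat])
  apply span_isPrime vN sN _ Gbar prime_Gbar
  · intro i
    fin_cases i
    · exact mem_of_eq (by simp [map_ofNat, c6] <;> ring) hc
    · exact mem_of_eq (by simp [map_ofNat, map_ofNat]) (Ideal.zero_mem _)
    · exact mem_of_eq (by simp [map_ofNat, map_ofNat]) (Ideal.zero_mem _)
    · exact mem_of_eq (by simp [map_ofNat, A3] <;> ring) hA3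
    · exact mem_of_eq (by simp [map_ofNat, map_ofNat]) (Ideal.zero_mem _)
    · exact mem_of_eq (by simp [map_ofNat, map_ofNat]) (Ideal.zero_mem _)
  · intro g hg
    simp only [Set.mem_insert_iff, Set.mem_singleton_iff] at hg
    rcases hg with rfl | rfl | rfl
    · exact mem_of_eq (by simp [map_ofNat, c6]) (Ideal.zero_mem _)
    · refine mem_of_eq (show aeval _ g1 = (-2 : R4) * Gbar by simp [map_ofNat, g1, Gbar_def] <;> ring) ?_
      exact Ideal.mul_mem_left _ _ (Ideal.subset_span rfl)
    · exact mem_of_eq (by simp [map_ofNat, A3] <;> ring) (Ideal.zero_mem _)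
  · apply cancel_C 2 (by norm_num)
    refine mem_of_eq (show (C 2 : R6) * aeval _ Gbar = A3 * (3 * X 4 + X 5) - g1 by
      simp [map_ofNat, Gbar_def, A3, g1] <;> ring) ?_
    exact Ideal.sub_mem _ (Ideal.mul_mem_right _ _ hA3) hg1




noncomputable def Aa : R6 := 6 * X 2 + 3 * X 3 + 6 * X 4 + 12 * X 5
noncomputable def A4 : R4 := 6 * X 0 + 3 * X 1 + 6 * X 2 + 12 * X 3
noncomputable def B4 : R4 := 3 * X 0 * X 1 - 4 * X 0 * X 3 - X 1 * X 3 - 6 * X 2 * X 3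
noncomputable def emb : Fin 4 → Fin 6 := ![2, 3, 4, 5]
@[simp] theorem emb_0 : emb 0 = 2 := rfl
@[simp] theorem emb_1 : emb 1 = 3 := rfl
@[simp] theorem emb_2 : emb 2 = 4 := rfl
@[simp] theorem emb_3 : emb 3 = 5 := rfl





-- rename facts
theorem ren_G1B : rename emb G1B = g1 := by simp [G1B, g1, map_ofNat] <;> ring
theorem ren_A4 : rename emb A4 = Aa := by simp [A4, Aa, map_ofNat] <;> ring
theorem ren_B4 : rename emb B4 = Ba := by simp [B4, Ba, map_ofNat] <;> ring

theorem g2_split : g2 = X 1 * Aa + Ba := by rw [g2, Aa, Ba]; ring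
theorem Aa_A3 : Aa = 3 * A3 := by rw [Aa, A3]; ring

-- the quotient domain and fraction field
noncomputable instance : (Ideal.span {G1B}).IsPrime :=
  (Ideal.span_singleton_prime prime_G1B.ne_zero).mpr prime_G1B

abbrev S4 := R4 ⧸ (Ideal.span {G1B})
abbrev L2 := FractionRing S4

noncomputable def iot : R4 →+* L2 :=
  (algebraMap S4 L2).comp (Ideal.Quotient.mk (Ideal.span {G1B}))

theorem iot_G1B : iot G1B = 0 := by
  simp only [iot, RingHom.comp_apply]
  have h0 : (Ideal.Quotient.mk (Ideal.span {G1B})) G1B = 0 :=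
    Ideal.Quotient.eq_zero_iff_mem.mpr (Ideal.subset_span rfl)
  rw [h0, map_zero]

theorem iot_eq_zero_iff (r : R4) : iot r = 0 ↔ r ∈ Ideal.span {G1B} := by
  simp only [iot, RingHom.comp_apply]
  rw [IsFractionRing.to_map_eq_zero_iff, Ideal.Quotient.eq_zero_iff_mem]

theorem A4_notin : A4 ∉ Ideal.span ({G1B} : Set R4) := by
  apply not_mem_span_of_eval _ ![0, 0, 0, 1]
  · intro g hg; rcases hg with rfl; simp [G1B]
  · simp [A4]

theorem alpha_ne : iot A4 ≠ 0 := fun h => A4_notin ((iot_eq_zero_iff A4).mp h)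

noncomputable def w2 : Fin 6 → L2 :=
  ![iot B4 / iot A4, -(iot B4 / iot A4), iot (X 0), iot (X 1), iot (X 2), iot (X 3)]
@[simp] theorem w2_0 : w2 0 = iot B4 / iot A4 := rfl
@[simp] theorem w2_1 : w2 1 = -(iot B4 / iot A4) := rfl
@[simp] theorem w2_2 : w2 2 = iot (X 0) := rfl
@[simp] theorem w2_3 : w2 3 = iot (X 1) := rfl
@[simp] theorem w2_4 : w2 4 = iot (X 2) := rfl
@[simp] theorem w2_5 : w2 5 = iot (X 3) := rfl

noncomputable def psi : R6 →+* L2 := eval₂Hom (iot.comp (C : ℚ →+* R4)) w2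

theorem psi_rename (r : R4) : psi (rename emb r) = iot r := by
  rw [psi, eval₂Hom_rename]
  have : (eval₂Hom (iot.comp (C : ℚ →+* R4)) (w2 ∘ emb)) = iot := by
    apply MvPolynomial.ringHom_ext
    · intro a
      simp only [eval₂Hom_C, RingHom.comp_apply]
    · intro i
      fin_cases i <;> rw [eval₂Hom_X'] <;> rfl
  rw [this]

theorem psi_c6 : psi c6 = 0 := by
  rw [c6]
  have : psi (X 0 + X 1) = w2 0 + w2 1 := by
    simp only [psi, map_add, eval₂Hom_X']
  rw [this, w2_0, w2_1]
  ring

theorem psi_g1 : psi g1 = 0 := by rw [← ren_G1B, psi_rename, iot_G1B]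

theorem psi_g2 : psi g2 = 0 := by
  rw [g2_split, map_add, map_mul, ← ren_A4, ← ren_B4, psi_rename, psi_rename]
  have hx1 : psi (X 1) = -(iot B4 / iot A4) := by
    have : psi (X 1) = w2 1 := by simp only [psi, eval₂Hom_X']
    rw [this, w2_1]
  rw [hx1]
  have : -(iot B4 / iot A4) * iot A4 + iot B4 = -(iot B4 / iot A4 * iot A4) + iot B4 := by ring
  rw [this, div_mul_cancel₀ _ alpha_ne]
  exact neg_add_cancel _

theorem step1 : ∀ p : R6, ∃ (n : ℕ) (r : R4),
    Aa ^ n * p - rename emb r ∈ Ideal.span {c6, g2} := by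
  intro p
  induction p using MvPolynomial.induction_on with
  | C a =>
      exact ⟨0, C a, by simp⟩
  | add p q hp hq =>
      obtain ⟨n1, r1, h1⟩ := hp
      obtain ⟨n2, r2, h2⟩ := hq
      refine ⟨n1 + n2, A4 ^ n2 * r1 + A4 ^ n1 * r2, ?_⟩
      have heq : Aa ^ (n1 + n2) * (p + q) - rename emb (A4 ^ n2 * r1 + A4 ^ n1 * r2)
          = Aa ^ n2 * (Aa ^ n1 * p - rename emb r1)
            + Aa ^ n1 * (Aa ^ n2 * q - rename emb r2) := by
        rw [map_add, map_mul, map_mul, map_pow, map_pow, ren_A4]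
        ring
      rw [heq]
      exact Ideal.add_mem _ (Ideal.mul_mem_left _ _ h1) (Ideal.mul_mem_left _ _ h2)
  | mul_X p i hp =>
      obtain ⟨n, r, hr⟩ := hp
      have hc6 : c6 ∈ Ideal.span ({c6, g2} : Set R6) := Ideal.subset_span (by simp)
      have hg2 : g2 ∈ Ideal.span ({c6, g2} : Set R6) := Ideal.subset_span (by simp)
      fin_cases i
      · -- i = 0
        refine ⟨n + 1, B4 * r, ?_⟩
        show Aa ^ (n + 1) * (p * X 0) - rename emb (B4 * r) ∈ Ideal.span {c6, g2}
        have heq : Aa ^ (n + 1) * (p * X 0) - rename emb (B4 * r)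
            = (Aa ^ (n + 1) * p) * c6 + (-(Aa ^ n * p)) * g2
              + Ba * (Aa ^ n * p - rename emb r) := by
          rw [map_mul, ren_B4, c6, g2, Ba, Aa]
          ring
        rw [heq]
        exact Ideal.add_mem _ (Ideal.add_mem _ (Ideal.mul_mem_left _ _ hc6)
          (Ideal.mul_mem_left _ _ hg2)) (Ideal.mul_mem_left _ _ hr)
      · -- i = 1
        refine ⟨n + 1, -(B4 * r), ?_⟩
        show Aa ^ (n + 1) * (p * X 1) - rename emb (-(B4 * r)) ∈ Ideal.span {c6, g2}
        have heq : Aa ^ (n + 1) * (p * X 1) - rename emb (-(B4 * r))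
            = (Aa * X 1) * (Aa ^ n * p - rename emb r) + (rename emb r) * g2 := by
          rw [map_neg, map_mul, ren_B4, g2, Ba, Aa]
          ring
        rw [heq]
        exact Ideal.add_mem _ (Ideal.mul_mem_left _ _ hr) (Ideal.mul_mem_left _ _ hg2)
      · refine ⟨n, r * X 0, ?_⟩
        show Aa ^ n * (p * X 2) - rename emb (r * X 0) ∈ Ideal.span {c6, g2}
        have heq : Aa ^ n * (p * X 2) - rename emb (r * X 0)
            = (Aa ^ n * p - rename emb r) * X 2 := by
          rw [map_mul, rename_X, emb_0]; ring
        rw [heq]; exact Ideal.mul_mem_right _ _ hr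
      · refine ⟨n, r * X 1, ?_⟩
        show Aa ^ n * (p * X 3) - rename emb (r * X 1) ∈ Ideal.span {c6, g2}
        have heq : Aa ^ n * (p * X 3) - rename emb (r * X 1)
            = (Aa ^ n * p - rename emb r) * X 3 := by
          rw [map_mul, rename_X, emb_1]; ring
        rw [heq]; exact Ideal.mul_mem_right _ _ hr
      · refine ⟨n, r * X 2, ?_⟩
        show Aa ^ n * (p * X 4) - rename emb (r * X 2) ∈ Ideal.span {c6, g2}
        have heq : Aa ^ n * (p * X 4) - rename emb (r * X 2)
            = (Aa ^ n * p - rename emb r) * X 4 := by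
          rw [map_mul, rename_X, emb_2]; ring
        rw [heq]; exact Ideal.mul_mem_right _ _ hr
      · refine ⟨n, r * X 3, ?_⟩
        show Aa ^ n * (p * X 5) - rename emb (r * X 3) ∈ Ideal.span {c6, g2}
        have heq : Aa ^ n * (p * X 5) - rename emb (r * X 3)
            = (Aa ^ n * p - rename emb r) * X 5 := by
          rw [map_mul, rename_X, emb_3]; ring
        rw [heq]; exact Ideal.mul_mem_right _ _ hr

noncomputable def pt1 : Fin 6 → ℚ := ![0, 0, -1, -2, 0, 1]
@[simp] theorem pt1_0 : pt1 0 = 0 := rfl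
@[simp] theorem pt1_1 : pt1 1 = 0 := rfl
@[simp] theorem pt1_2 : pt1 2 = -1 := rfl
@[simp] theorem pt1_3 : pt1 3 = -2 := rfl
@[simp] theorem pt1_4 : pt1 4 = 0 := rfl
@[simp] theorem pt1_5 : pt1 5 = 1 := rfl
noncomputable def pt2 : Fin 6 → ℚ := ![0, 0, 0, 0, 0, 1]
@[simp] theorem pt2_0 : pt2 0 = 0 := rfl
@[simp] theorem pt2_1 : pt2 1 = 0 := rfl
@[simp] theorem pt2_2 : pt2 2 = 0 := rfl
@[simp] theorem pt2_3 : pt2 3 = 0 := rfl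
@[simp] theorem pt2_4 : pt2 4 = 0 := rfl
@[simp] theorem pt2_5 : pt2 5 = 1 := rfl

theorem Ba_notin : Ba ∉ Ideal.span ({c6, g1, A3} : Set R6) := by
  apply not_mem_span_of_eval _ pt1
  · intro g hg
    rcases hg with rfl | rfl | rfl
    · simp [c6]
    · simp [g1] <;> norm_num
    · simp [A3] <;> norm_num
  · simp [Ba] <;> norm_num

theorem A3_notinM : A3 ∉ Ideal.span ({c6, g1} : Set R6) := by
  apply not_mem_span_of_eval _ pt2
  · intro g hg
    rcases hg with rfl | rfl
    · simp [c6]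
    · simp [g1]
  · simp [A3] <;> norm_num

theorem satur_step : ∀ t : R6, Aa * t ∈ Ideal.span {c6, g1, g2} →
    t ∈ Ideal.span {c6, g1, g2} := by
  intro t ht
  obtain ⟨e, z, hz, hze⟩ := Submodule.mem_span_insert.mp ht
  obtain ⟨u, v, huv⟩ := Ideal.mem_span_pair.mp hz
  rw [smul_eq_mul, ← huv] at hze
  -- hze : Aa * t = e * c6 + (u * g1 + v * g2)
  have hA3N : A3 ∈ Ideal.span ({c6, g1, A3} : Set R6) := Ideal.subset_span (by simp)
  have hc6N : c6 ∈ Ideal.span ({c6, g1, A3} : Set R6) := Ideal.subset_span (by simp)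
  have hg1N : g1 ∈ Ideal.span ({c6, g1, A3} : Set R6) := Ideal.subset_span (by simp)
  have hAaN : Aa ∈ Ideal.span ({c6, g1, A3} : Set R6) :=
    mem_of_eq Aa_A3 (Ideal.mul_mem_left _ _ hA3N)
  have hvBa : v * Ba ∈ Ideal.span ({c6, g1, A3} : Set R6) := by
    have heq : v * Ba = (t - v * X 1) * Aa - e * c6 - u * g1 := by
      linear_combination -hze - v * g2_split
    rw [heq]
    exact Ideal.sub_mem _ (Ideal.sub_mem _ (Ideal.mul_mem_left _ _ hAaN)
      (Ideal.mul_mem_left _ _ hc6N)) (Ideal.mul_mem_left _ _ hg1N)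
  have hv : v ∈ Ideal.span ({c6, g1, A3} : Set R6) :=
    (N_isPrime.mem_or_mem hvBa).resolve_right Ba_notin
  obtain ⟨e2, z2, hz2, hveq⟩ := Submodule.mem_span_insert.mp hv
  obtain ⟨u2, zz, huz⟩ := Ideal.mem_span_pair.mp hz2
  rw [smul_eq_mul, ← huz] at hveq
  -- hveq : v = e2 * c6 + (u2 * g1 + zz * A3)
  have key : A3 * (3 * t - zz * g2) = (e + e2 * g2) * c6 + (u + u2 * g2) * g1 := by
    linear_combination hze + g2 * hveq - t * Aa_A3
  have hmem : A3 * (3 * t - zz * g2) ∈ Ideal.span ({c6, g1} : Set R6) := by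
    rw [key]
    exact Ideal.add_mem _
      (Ideal.mul_mem_left _ _ (Ideal.subset_span (by simp)))
      (Ideal.mul_mem_left _ _ (Ideal.subset_span (by simp)))
  have h3t : (3 * t - zz * g2) ∈ Ideal.span ({c6, g1} : Set R6) :=
    (M_isPrime.mem_or_mem hmem).resolve_left A3_notinM
  have hMP : Ideal.span ({c6, g1} : Set R6) ≤ Ideal.span ({c6, g1, g2} : Set R6) :=
    Ideal.span_mono (by intro x hx; rcases hx with rfl | rfl <;> simp)
  have hg2P : g2 ∈ Ideal.span ({c6, g1, g2} : Set R6) := Ideal.subset_span (by simp)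
  have h3 : (3 : R6) * t ∈ Ideal.span ({c6, g1, g2} : Set R6) := by
    have : (3 : R6) * t = (3 * t - zz * g2) + zz * g2 := by ring
    rw [this]
    exact Ideal.add_mem _ (hMP h3t) (Ideal.mul_mem_left _ _ hg2P)
  apply cancel_C 3 (by norm_num)
  exact mem_of_eq (by simp [map_ofNat]) h3

theorem satur : ∀ (n : ℕ) (t : R6), Aa ^ n * t ∈ Ideal.span {c6, g1, g2} →
    t ∈ Ideal.span {c6, g1, g2} := by
  intro n
  induction n with
  | zero => intro t ht; simpa using ht
  | succ n ih =>
      intro t ht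
      apply satur_step
      apply ih
      rw [show Aa ^ n * (Aa * t) = Aa ^ (n + 1) * t by ring]
      exact ht

theorem P2_eq_ker : Ideal.span {c6, g1, g2} = RingHom.ker psi := by
  apply le_antisymm
  · rw [Ideal.span_le]
    intro g hg
    rcases hg with rfl | rfl | rfl
    · exact psi_c6
    · exact psi_g1
    · exact psi_g2
  · intro p hp
    obtain ⟨n, r, hr⟩ := step1 p
    have hsub : Ideal.span ({c6, g2} : Set R6) ≤ RingHom.ker psi := by
      rw [Ideal.span_le]
      intro g hg
      rcases hg with rfl | rfl
      · exact psi_c6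
      · exact psi_g2
    have h0 : psi (Aa ^ n * p - rename emb r) = 0 := hsub hr
    have hiotr : iot r = 0 := by
      rw [← psi_rename]
      have : psi (rename emb r) = psi (Aa ^ n * p) - psi (Aa ^ n * p - rename emb r) := by
        rw [map_sub]; ring
      have hp0 : psi p = 0 := by rwa [RingHom.mem_ker] at hp
      rw [this, h0, map_mul, hp0, mul_zero, sub_zero]
    have hrmem : r ∈ Ideal.span ({G1B} : Set R4) := (iot_eq_zero_iff r).mp hiotr
    obtain ⟨q, hq⟩ := Ideal.mem_span_singleton'.mp hrmem
    have hren : rename emb r = rename emb q * g1 := by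
      rw [← hq, map_mul, ren_G1B]
    have hsub2 : Ideal.span ({c6, g2} : Set R6) ≤ Ideal.span ({c6, g1, g2} : Set R6) :=
      Ideal.span_mono (by intro x hx; rcases hx with rfl | rfl <;> simp)
    have hAnp : Aa ^ n * p ∈ Ideal.span ({c6, g1, g2} : Set R6) := by
      have : Aa ^ n * p = (Aa ^ n * p - rename emb r) + rename emb q * g1 := by
        rw [← hren]; ring
      rw [this]
      exact Ideal.add_mem _ (hsub2 hr)
        (Ideal.mul_mem_left _ _ (Ideal.subset_span (by simp)))
    exact satur n p hAnp

theorem P2_isPrime : (Ideal.span {c6, g1, g2}).IsPrime := by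
  rw [P2_eq_ker]
  exact RingHom.ker_isPrime _



noncomputable def i1 : R6 := (X 0 + X 1) * (3 * X 3) - (X 0 + X 1) * (X 2 + X 3)
noncomputable def i2 : R6 := (X 0 + X 1) * (2 * X 5) - (X 0 + X 1) * (X 4 + X 5)
noncomputable def i3 : R6 := (X 2 + X 3) * (2 * X 5) - 3 * X 3 * (X 4 + X 5)
noncomputable def i4 : R6 := (X 0 + X 2 + X 4) * (X 3 + 4 * X 5)
  - (2 * X 2 + 2 * X 4) * (X 1 + X 3 + X 5)





noncomputable def pt3 : Fin 6 → ℚ := ![1, 0, 0, 0, 0, 0]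
@[simp] theorem pt3_0 : pt3 0 = 1 := rfl
@[simp] theorem pt3_1 : pt3 1 = 0 := rfl
@[simp] theorem pt3_2 : pt3 2 = 0 := rfl
@[simp] theorem pt3_3 : pt3 3 = 0 := rfl
@[simp] theorem pt3_4 : pt3 4 = 0 := rfl
@[simp] theorem pt3_5 : pt3 5 = 0 := rfl

theorem c6_notinP1 : c6 ∉ Ideal.span ({d1, d2, f6} : Set R6) := by
  apply not_mem_span_of_eval _ pt3
  · intro g hg
    rcases hg with rfl | rfl | rfl
    · simp [d1]
    · simp [d2]
    · simp [f6]
  · simp [c6]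

theorem main_eq : Ideal.span {i1, i2, i3, i4}
    = Ideal.span {d1, d2, f6} ⊓ Ideal.span {c6, g1, g2} := by
  have hd1 : d1 ∈ Ideal.span ({d1, d2, f6} : Set R6) := Ideal.subset_span (by simp)
  have hd2 : d2 ∈ Ideal.span ({d1, d2, f6} : Set R6) := Ideal.subset_span (by simp)
  have hf6 : f6 ∈ Ideal.span ({d1, d2, f6} : Set R6) := Ideal.subset_span (by simp)
  have hc6 : c6 ∈ Ideal.span ({c6, g1, g2} : Set R6) := Ideal.subset_span (by simp)
  have hg1 : g1 ∈ Ideal.span ({c6, g1, g2} : Set R6) := Ideal.subset_span (by simp)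
  have hg2 : g2 ∈ Ideal.span ({c6, g1, g2} : Set R6) := Ideal.subset_span (by simp)
  have hi1 : i1 ∈ Ideal.span ({i1, i2, i3, i4} : Set R6) := Ideal.subset_span (by simp)
  have hi2 : i2 ∈ Ideal.span ({i1, i2, i3, i4} : Set R6) := Ideal.subset_span (by simp)
  have hi3 : i3 ∈ Ideal.span ({i1, i2, i3, i4} : Set R6) := Ideal.subset_span (by simp)
  have hi4 : i4 ∈ Ideal.span ({i1, i2, i3, i4} : Set R6) := Ideal.subset_span (by simp)
  have hIP1 : Ideal.span ({i1, i2, i3, i4} : Set R6) ≤ Ideal.span ({d1, d2, f6} : Set R6) := by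
    rw [Ideal.span_le]
    intro g hg
    rcases hg with rfl | rfl | rfl | rfl
    · exact mem_of_eq (show i1 = (-(X 0 + X 1)) * d2 by rw [i1, d2]; ring)
        (Ideal.mul_mem_left _ _ hd2)
    · exact mem_of_eq (show i2 = (-(X 0 + X 1)) * d1 by rw [i2, d1]; ring)
        (Ideal.mul_mem_left _ _ hd1)
    · exact mem_of_eq (show i3 = (2 * X 5) * d2 - (3 * X 3) * d1 by rw [i3, d1, d2]; ring)
        (Ideal.sub_mem _ (Ideal.mul_mem_left _ _ hd2) (Ideal.mul_mem_left _ _ hd1))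
    · exact mem_of_eq
        (show i4 = f6 + (-2 * X 1 - X 3 + 2 * X 5) * d1 + (-2 * X 1 - X 3 + 2 * X 5) * d2 by
          rw [i4, f6, d1, d2]; ring)
        (Ideal.add_mem _ (Ideal.add_mem _ hf6 (Ideal.mul_mem_left _ _ hd1))
          (Ideal.mul_mem_left _ _ hd2))
  have hIP2 : Ideal.span ({i1, i2, i3, i4} : Set R6) ≤ Ideal.span ({c6, g1, g2} : Set R6) := by
    rw [Ideal.span_le]
    intro g hg
    rcases hg with rfl | rfl | rfl | rfl
    · exact mem_of_eq (show i1 = (2 * X 3 - X 2) * c6 by rw [i1, c6]; ring)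
        (Ideal.mul_mem_left _ _ hc6)
    · exact mem_of_eq (show i2 = (X 5 - X 4) * c6 by rw [i2, c6]; ring)
        (Ideal.mul_mem_left _ _ hc6)
    · exact mem_of_eq (show i3 = (-1) * g1 by rw [i3, g1]; ring)
        (Ideal.mul_mem_left _ _ hg1)
    · apply cancel_C 3 (by norm_num)
      refine mem_of_eq (show (C (3:ℚ)) * i4
          = (3 * (X 3 + 4 * X 5)) * c6 - g1 - g2 by
        have h3 : (C (3:ℚ) : R6) = 3 := by simp [map_ofNat]
        rw [h3, i4, c6, g1, g2]; ring) ?_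
      exact Ideal.sub_mem _ (Ideal.sub_mem _ (Ideal.mul_mem_left _ _ hc6) hg1) hg2
  apply le_antisymm
  · rw [Ideal.span_le]
    intro g hg
    have hg' : g ∈ Ideal.span ({i1, i2, i3, i4} : Set R6) := Ideal.subset_span hg
    exact ⟨hIP1 hg', hIP2 hg'⟩
  · intro x hx
    obtain ⟨hx1, hx2⟩ := Ideal.mem_inf.mp hx
    -- P2 ≤ I ⊔ span {c6}
    have hsup : Ideal.span ({c6, g1, g2} : Set R6)
        ≤ Ideal.span ({i1, i2, i3, i4} : Set R6) ⊔ Ideal.span ({c6} : Set R6) := by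
      rw [Ideal.span_le]
      intro g hg
      rcases hg with rfl | rfl | rfl
      · exact Ideal.mem_sup_right (Ideal.subset_span rfl)
      · exact Ideal.mem_sup_left (mem_of_eq (show g1 = (-1) * i3 by rw [g1, i3]; ring)
          (Ideal.mul_mem_left _ _ hi3))
      · refine mem_of_eq (show g2 = (-3) * i4 + i3 + (3 * (X 3 + 4 * X 5)) * c6 by
          rw [g2, i4, i3, c6]; ring) ?_
        exact Ideal.add_mem _
          (Ideal.add_mem _ (Ideal.mem_sup_left (Ideal.mul_mem_left _ _ hi4))
            (Ideal.mem_sup_left hi3))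
          (Ideal.mem_sup_right (Ideal.mul_mem_left _ _ (Ideal.subset_span rfl)))
    obtain ⟨y, hy, z, hz, hyz⟩ := Submodule.mem_sup.mp (hsup hx2)
    obtain ⟨r, hr⟩ := Ideal.mem_span_singleton'.mp hz
    have hrc : r * c6 ∈ Ideal.span ({d1, d2, f6} : Set R6) := by
      have : r * c6 = x - y := by rw [hr]; rw [← hyz]; ring
      rw [this]
      exact Ideal.sub_mem _ hx1 (hIP1 hy)
    have hrP1 : r ∈ Ideal.span ({d1, d2, f6} : Set R6) :=
      (P1_isPrime.mem_or_mem hrc).resolve_right c6_notinP1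
    -- r * c6 ∈ I
    have hmul : ∀ w ∈ Ideal.span ({d1, d2, f6} : Set R6),
        w * c6 ∈ Ideal.span ({i1, i2, i3, i4} : Set R6) := by
      intro w hw
      induction hw using Submodule.span_induction with
      | mem a ha =>
          rcases ha with rfl | rfl | rfl
          · exact mem_of_eq (show d1 * c6 = (-1) * i2 by rw [d1, c6, i2]; ring)
              (Ideal.mul_mem_left _ _ hi2)
          · exact mem_of_eq (show d2 * c6 = (-1) * i1 by rw [d2, c6, i1]; ring)
              (Ideal.mul_mem_left _ _ hi1)
          · refine mem_of_eq (show f6 * c6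
                = c6 * i4 + (-2 * X 1 - X 3 + 2 * X 5) * i2 + (-2 * X 1 - X 3 + 2 * X 5) * i1 by
              rw [f6, c6, i4, i2, i1]; ring) ?_
            exact Ideal.add_mem _ (Ideal.add_mem _ (Ideal.mul_mem_left _ _ hi4)
              (Ideal.mul_mem_left _ _ hi2)) (Ideal.mul_mem_left _ _ hi1)
      | zero => simp
      | add a b _ _ ha hb =>
          exact mem_of_eq (show (a + b) * c6 = a * c6 + b * c6 by ring) (Ideal.add_mem _ ha hb)
      | smul a b _ hb =>
          exact mem_of_eq (show (a • b) * c6 = a * (b * c6) by rw [smul_eq_mul]; ring)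
            (Ideal.mul_mem_left _ _ hb)
    have : x = y + r * c6 := by rw [hr, ← hyz]
    rw [this]
    exact Ideal.add_mem _ hy (hmul r hrP1)


end CentAux

/-- The ideal of the Spohn variety of the `3 × 2` centipede
game is the intersection of two prime ideals. -/
theorem centipede_primary_decomposition :
    (Ideal.span
        {(s11 + s12) * (3 * s22) - (s11 + s12) * (s21 + s22),
         (s11 + s12) * (2 * s32) - (s11 + s12) * (s31 + s32),
         (s21 + s22) * (2 * s32) - (3 * s22) * (s31 + s32),
         (s11 + s21 + s31) * (s22 + 4 * s32)
           - (2 * s21 + 2 * s31) * (s12 + s22 + s32)}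
      = Ideal.span
          {s31 - s32, s21 - 2 * s22,
           s11 * s22 - 4 * s12 * s22 - 2 * s22 ^ 2 + 4 * s11 * s32
             - 2 * s12 * s32 + 3 * s22 * s32 + 2 * s32 ^ 2}
        ⊓ Ideal.span
          {s11 + s12,
           3 * s22 * s31 - 2 * s21 * s32 + s22 * s32,
           6 * s12 * s21 + 3 * s12 * s22 + 3 * s21 * s22 + 6 * s12 * s31
             + 12 * s12 * s32 - 4 * s21 * s32 - s22 * s32 - 6 * s31 * s32}) ∧
    (Ideal.span
        {s31 - s32, s21 - 2 * s22,
         s11 * s22 - 4 * s12 * s22 - 2 * s22 ^ 2 + 4 * s11 * s32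
           - 2 * s12 * s32 + 3 * s22 * s32 + 2 * s32 ^ 2} :
      Ideal (MvPolynomial (Fin 6) ℚ)).IsPrime ∧
    (Ideal.span
        {s11 + s12,
         3 * s22 * s31 - 2 * s21 * s32 + s22 * s32,
         6 * s12 * s21 + 3 * s12 * s22 + 3 * s21 * s22 + 6 * s12 * s31
           + 12 * s12 * s32 - 4 * s21 * s32 - s22 * s32 - 6 * s31 * s32} :
      Ideal (MvPolynomial (Fin 6) ℚ)).IsPrime := by
  exact ⟨CentAux.main_eq, CentAux.P1_isPrime, CentAux.P2_isPrime⟩
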